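/- arXiv:1104.0196 — 2 statements merged into one kernel-verified Lean document; each statement's English description precedes it below -/
import Mathlib

section
/- For every natural number 𝐧 and every c_* ∈ 𝒬_𝐧, there is exactly one element (r_*, p_*) of the fiber ι̃^{-1}(c_*) ⊆ A_𝐧 for which the number of parts τ_{p_*} of p_* is minimal among all elements of ι̃^{-1}(c_*). -/
/-- A partition: a nonincreasing list of positive integers (possibly empty). -/
def IsPartition (p : List ℕ) : Prop := p.Pairwise (· ≥ ·) ∧ ∀ x ∈ p, 0 < x

/-- `𝒫̃`: partitions with an even number of parts in which the parts pair up: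
`p₁ = p₂, p₃ = p₄, …` (stated 0-indexed). -/
def Ptilde : Set (List ℕ) :=
  {p | IsPartition p ∧ Even p.length ∧ ∀ i, p.getD (2 * i) 0 = p.getD (2 * i + 1) 0}

/-- `𝒮^κ` for `κ ∈ {0,1}`: partitions with all parts even (and, if `κ = 0`,
an even number of parts). -/
def SK (κ : ℕ) : Set (List ℕ) :=
  {r | IsPartition r ∧ (∀ x ∈ r, x % 2 = 0) ∧ (κ = 0 → Even r.length)}

/-- `𝒮^κ_N`. -/
def SKN (κ N : ℕ) : Set (List ℕ) := {r | r ∈ SK κ ∧ r.sum = N}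

/-- `𝒜^κ_{2n} = {(r_*, p_*) ∈ 𝒮^κ × 𝒫̃ : |r_*| + |p_*| = 2n}`. -/
def AK (κ n : ℕ) : Set (List ℕ × List ℕ) :=
  {rp | rp.1 ∈ SK κ ∧ rp.2 ∈ Ptilde ∧ rp.1.sum + rp.2.sum = 2 * n}

/-- The partition whose multiset of parts is the disjoint union of the multisets of
parts of `r` and `p`: sort `r ++ p` nonincreasingly. -/
def pmerge (r p : List ℕ) : List ℕ := (r ++ p).mergeSort (fun a b => decide (b ≤ a))

/-- `𝒬`: partitions in which every even part has even multiplicity. -/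
def Qset : Set (List ℕ) :=
  {c | IsPartition c ∧ ∀ j, j % 2 = 0 → Even (c.count j)}

/-- `𝒬_N`. -/
def QN (N : ℕ) : Set (List ℕ) := {c | c ∈ Qset ∧ c.sum = N}

/-- The odd parts of `l`, listed in (nonincreasing) order with multiplicity:
`r¹ ≥ r² ≥ … ≥ r^s`. -/
def oddParts (l : List ℕ) : List ℕ := l.filter (fun x => x % 2 = 1)

/-- The set `ℛ` (conditions stated with 1-based indices `u` for the list of odd parts;
`(oddParts l).getD (u-1) 0` is `r^u`). -/
def Rset : Set (List ℕ) :=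
  {l | l ∈ Qset ∧
    (l ≠ [] → l.getD 0 0 % 2 = 1) ∧
    (l ≠ [] → Even l.length → l.getD (l.length - 1) 0 % 2 = 1) ∧
    (∀ u, 1 ≤ u → u + 1 ≤ (oddParts l).length → u % 2 = 1 →
        (oddParts l).getD u 0 < (oddParts l).getD (u - 1) 0) ∧
    (∀ u, 1 ≤ u → u + 1 ≤ (oddParts l).length → u % 2 = 0 →
        ∀ k < l.length,
          ¬((oddParts l).getD u 0 < l.getD k 0 ∧ l.getD k 0 < (oddParts l).getD (u - 1) 0))}

/-- `ℛ_N = ℛ ∩ 𝒬_N`. -/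
def RN (N : ℕ) : Set (List ℕ) := {l | l ∈ Rset ∧ l.sum = N}

/-- `A_𝐧 = {(r_*, p_*) ∈ ℛ × 𝒫̃ : |r_*| + |p_*| = 𝐧}`. -/
def An (m : ℕ) : Set (List ℕ × List ℕ) :=
  {rp | rp.1 ∈ Rset ∧ rp.2 ∈ Ptilde ∧ rp.1.sum + rp.2.sum = m}


section Stmt6Aux
open List

/-- In a nonincreasingly sorted list, an upward-closed predicate holds exactly on a prefix. -/
lemma sorted_countP_iff {L : List ℕ} (hs : L.Pairwise (· ≥ ·)) {p : ℕ → Bool}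
    (hp : ∀ a b : ℕ, a ≤ b → p a = true → p b = true) :
    ∀ i, i < L.length → (p (L.getD i 0) = true ↔ i < L.countP p) := by
  induction L with
  | nil => intro i hi; simp at hi
  | cons x T ih =>
    rw [List.pairwise_cons] at hs
    intro i hi
    match i with
    | 0 =>
      simp only [List.getD_cons_zero, List.countP_cons]
      constructor
      · intro hx; simp [hx]
      · intro h
        by_contra hx
        rw [if_neg hx, Nat.add_zero] at h
        obtain ⟨a, ha, hpa⟩ := List.countP_pos_iff.mp h
        exact hx (hp a x (hs.1 a ha) hpa)
    | Nat.succ j =>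
      simp only [List.getD_cons_succ, List.countP_cons]
      have hj : j < T.length := by simpa using hi
      rw [ih hs.2 j hj]
      by_cases hx : p x = true
      · simp [hx]
      · have hT : T.countP p = 0 := by
          rw [List.countP_eq_zero]
          intro a ha hpa
          exact hx (hp a x (hs.1 a ha) hpa)
        simp [hx, hT]

lemma countP_le_split (v : ℕ) (L : List ℕ) :
    L.countP (fun y => decide (v ≤ y)) = L.countP (fun y => decide (v < y)) + L.count v := by
  induction L with
  | nil => simp
  | cons x T ih =>
    simp only [List.countP_cons, List.count_cons, ih]
    rcases lt_trichotomy v x with h | h | h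
    · simp [h, le_of_lt h, Nat.ne_of_lt' h]
      omega
    · subst h; simp; omega
    · simp [not_le_of_gt h, not_lt_of_gt h, Nat.ne_of_lt h]

lemma sorted_getD_eq_iff {L : List ℕ} (hs : L.Pairwise (· ≥ ·)) (v : ℕ)
    {i : ℕ} (hi : i < L.length) :
    L.getD i 0 = v ↔ L.countP (fun y => decide (v < y)) ≤ i ∧
      i < L.countP (fun y => decide (v < y)) + L.count v := by
  have h1 := sorted_countP_iff hs (p := fun y => decide (v < y))
    (fun a b hab ha => by simp_all; omega) i hi
  have h2 := sorted_countP_iff hs (p := fun y => decide (v ≤ y))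
    (fun a b hab ha => by simp_all; omega) i hi
  rw [countP_le_split] at h2
  simp only [decide_eq_true_eq] at h1 h2
  constructor
  · intro h; rw [h] at h1 h2; omega
  · intro h
    have hle : v ≤ L.getD i 0 := h2.mpr h.2
    have hnlt : ¬ v < L.getD i 0 := fun hlt => absurd (h1.mp hlt) (by omega)
    omega

lemma sorted_getD_block {L : List ℕ} (hs : L.Pairwise (· ≥ ·)) {v j : ℕ}
    (h1 : L.countP (fun y => decide (v < y)) ≤ j)
    (h2 : j < L.countP (fun y => decide (v < y)) + L.count v) :
    L.getD j 0 = v := by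
  have hlen : L.countP (fun y => decide (v < y)) + L.count v ≤ L.length := by
    rw [← countP_le_split]; exact List.countP_le_length
  exact (sorted_getD_eq_iff hs v (by omega)).mpr ⟨h1, h2⟩

/-- head is max -/
lemma sorted_getD_zero_max {L : List ℕ} (hs : L.Pairwise (· ≥ ·)) {y : ℕ} (hy : y ∈ L) :
    y ≤ L.getD 0 0 := by
  cases L with
  | nil => simp at hy
  | cons x T =>
    rw [List.pairwise_cons] at hs
    simp only [List.getD_cons_zero]
    rcases List.mem_cons.mp hy with h | h
    · omega
    · exact hs.1 y h

/-- last is min -/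
lemma sorted_getD_last_min {L : List ℕ} (hs : L.Pairwise (· ≥ ·)) {y : ℕ} (hy : y ∈ L) :
    L.getD (L.length - 1) 0 ≤ y := by
  have hne : L ≠ [] := List.ne_nil_of_mem hy
  have hlt : L.length - 1 < L.length := by
    have := List.length_pos_iff.mpr hne; omega
  obtain ⟨n, hn, rfl⟩ := List.mem_iff_getElem.mp hy
  rw [List.getD_eq_getElem _ _ hlt]
  rcases Nat.lt_or_ge n (L.length - 1) with h | h
  · exact List.pairwise_iff_getElem.mp hs n (L.length - 1) hn hlt h
  · have : n = L.length - 1 := by omega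
    subst this; rfl

lemma sorted_getD_antitone {L : List ℕ} (hs : L.Pairwise (· ≥ ·)) {i j : ℕ}
    (hij : i ≤ j) (hj : j < L.length) : L.getD j 0 ≤ L.getD i 0 := by
  rcases Nat.lt_or_ge i j with h | h
  · rw [List.getD_eq_getElem _ _ hj, List.getD_eq_getElem _ _ (lt_of_le_of_lt hij hj)]
    exact List.pairwise_iff_getElem.mp hs i j _ _ h
  · have : i = j := by omega
    subst this; rfl


/-- Any list with the "pairing" structure has even countP for every predicate. -/
lemma paired_even_countP : ∀ (p : List ℕ), Even p.length →
    (∀ i, p.getD (2 * i) 0 = p.getD (2 * i + 1) 0) → ∀ q : ℕ → Bool, Even (p.countP q)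
  | [], _, _, q => by simp
  | [a], h, _, q => by simp at h
  | a :: b :: t, h, hpair, q => by
    have hab : a = b := by have := hpair 0; simpa using this
    subst hab
    have ht : Even t.length := by simp at h; rcases h with ⟨k, hk⟩; exact ⟨k-1, by omega⟩
    have htpair : ∀ i, t.getD (2 * i) 0 = t.getD (2 * i + 1) 0 := by
      intro i
      have := hpair (i + 1)
      simpa [show 2 * (i+1) = 2*i + 1 + 1 by ring, show 2*(i+1)+1 = (2*i+1)+1+1 by ring] using this
    obtain ⟨k, hk⟩ := paired_even_countP t ht htpair q
    simp only [List.countP_cons]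
    by_cases hq : q a = true
    · rw [if_pos hq]; exact ⟨k + 1, by omega⟩
    · rw [if_neg hq]; exact ⟨k, by omega⟩

/-- converse: sorted with all even counts gives the pairing structure -/
lemma paired_of_even_counts : ∀ (l : List ℕ), l.Pairwise (· ≥ ·) →
    (∀ v, Even (l.count v)) →
    Even l.length ∧ ∀ i, l.getD (2 * i) 0 = l.getD (2 * i + 1) 0
  | [] => by intro _ _; constructor <;> simp
  | [a] => by
    intro _ hc
    exfalso
    have := hc a
    simp [List.count_cons] at this
  | a :: b :: t => by
    intro hs hc
    have hs1 : ∀ y ∈ b :: t, a ≥ y := (List.pairwise_cons.mp hs).1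
    have hs2 : (b :: t).Pairwise (· ≥ ·) := (List.pairwise_cons.mp hs).2
    have hab : a = b := by
      by_contra hne
      have hat : a ∉ b :: t := by
        intro hmem
        rcases List.mem_cons.mp hmem with h | h
        · exact hne h
        · have h1 : a ≥ b := hs1 b (List.mem_cons_self)
          have h2 : b ≥ a := (List.pairwise_cons.mp hs2).1 a h
          exact hne (by omega)
      have hz : (b :: t).count a = 0 := List.count_eq_zero_of_not_mem hat
      have := hc a
      rw [List.count_cons_self, hz] at this
      simp [Nat.even_iff] at this
    subst hab
    have hts : t.Pairwise (· ≥ ·) := (List.pairwise_cons.mp hs2).2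
    have htc : ∀ v, Even (t.count v) := by
      intro v
      have := hc v
      rw [List.count_cons, List.count_cons] at this
      by_cases hv : v = a
      · subst hv; simp at this; rcases this with ⟨k, hk⟩; exact ⟨k - 1, by omega⟩
      · simpa [Ne.symm hv, hv] using this
    obtain ⟨hlen, hpair⟩ := paired_of_even_counts t hts htc
    refine ⟨by rcases hlen with ⟨k, hk⟩; exact ⟨k+1, by simp; omega⟩, ?_⟩
    intro i
    match i with
    | 0 => simp
    | Nat.succ j =>
      have e1 : 2 * (j + 1) = (2 * j) + 1 + 1 := by ring
      rw [e1]
      simpa using hpair j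

lemma even_length_of_even_counts (L : List ℕ) (h : ∀ v, Even (L.count v)) :
    Even L.length := by
  classical
  have hcard : (Multiset.ofList L).toFinset.sum (fun a => Multiset.count a (Multiset.ofList L))
      = Multiset.card (Multiset.ofList L) := Multiset.toFinset_sum_count_eq _
  have : Even (Multiset.card (Multiset.ofList L)) := by
    rw [← hcard]
    refine Finset.even_sum _ (fun a _ => ?_)
    rw [Multiset.coe_count]
    exact h a
  simpa using this

-- ==== stage 3 ====
def oddGTp (v : ℕ) : ℕ → Bool := fun y => decide (v < y) && decide (y % 2 = 1)
def nOdd (l : List ℕ) (v : ℕ) : ℕ := l.countP (oddGTp v)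
def CountCond (l : List ℕ) : Prop :=
  ∀ v ∈ l, (v % 2 = 1 → l.count v ≤ 2 ∧ (l.count v = 2 → nOdd l v % 2 = 1)) ∧
           (v % 2 = 0 → nOdd l v % 2 = 1)

lemma nOdd_eq (l : List ℕ) (v : ℕ) :
    nOdd l v = (oddParts l).countP (fun y => decide (v < y)) := by
  rw [oddParts, List.countP_filter]; rfl

lemma mono_lt (v : ℕ) : ∀ a b : ℕ, a ≤ b →
    (fun y => decide (v < y)) a = true → (fun y => decide (v < y)) b = true := by
  intro a b hab ha; simp_all; omega

lemma getD_mem {l : List ℕ} {i : ℕ} (h : i < l.length) : l.getD i 0 ∈ l := by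
  rw [List.getD_eq_getElem _ _ h]; exact List.getElem_mem h

lemma oddParts_sorted {l : List ℕ} (hs : l.Pairwise (· ≥ ·)) :
    (oddParts l).Pairwise (· ≥ ·) := hs.filter _

lemma mem_oddParts {l : List ℕ} {y : ℕ} :
    y ∈ oddParts l ↔ y ∈ l ∧ y % 2 = 1 := by
  simp [oddParts, List.mem_filter]

lemma count_oddParts {l : List ℕ} {v : ℕ} (hv : v % 2 = 1) :
    (oddParts l).count v = l.count v := List.count_filter (by simp [hv])

lemma length_split (l : List ℕ) :
    l.length = (oddParts l).length + (l.filter (fun x => decide (x % 2 = 0))).length := by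
  induction l with
  | nil => simp [oddParts]
  | cons x t ih =>
    by_cases hx : x % 2 = 1
    · simp only [oddParts, List.filter_cons] at *
      simp [hx, show ¬ (x % 2 = 0) by omega, ih]
      omega
    · simp only [oddParts, List.filter_cons] at *
      simp [hx, show x % 2 = 0 by omega, ih]
      omega

lemma length_parity {l : List ℕ} (hQ : l ∈ Qset) :
    l.length % 2 = (oddParts l).length % 2 := by
  have hsplit := length_split l
  have heven : Even (l.filter (fun x => decide (x % 2 = 0))).length := by
    apply even_length_of_even_counts
    intro v
    by_cases hv : v % 2 = 0
    · rw [List.count_filter (by simp [hv])]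
      exact hQ.2 v hv
    · rw [List.count_eq_zero_of_not_mem]
      · exact Even.zero
      · intro hmem
        have := List.of_mem_filter hmem
        simp at this; omega
  rcases heven with ⟨k, hk⟩
  omega

lemma forward {l : List ℕ} (hl : l ∈ Rset) : CountCond l := by
  obtain ⟨hQ, h1, h2, h3, h4⟩ := hl
  have hs : l.Pairwise (· ≥ ·) := hQ.1.1
  have hOs : (oddParts l).Pairwise (· ≥ ·) := oddParts_sorted hs
  intro v hv
  constructor
  · intro hodd
    have hvO : v ∈ oddParts l := mem_oddParts.mpr ⟨hv, hodd⟩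
    have hcount : (oddParts l).count v = l.count v := count_oddParts hodd
    set O := oddParts l with hO
    set a := O.countP (fun y => decide (v < y)) with ha
    have hbound : a + O.count v ≤ O.length := by
      rw [ha, ← countP_le_split]; exact List.countP_le_length
    have hS : ∀ u, a + 1 ≤ u → u + 1 ≤ a + O.count v → u % 2 = 1 → False := by
      intro u hu1 hu2 hu3
      have e1 : O.getD u 0 = v := sorted_getD_block hOs (by omega) (by omega)
      have e2 : O.getD (u - 1) 0 = v := sorted_getD_block hOs (by omega) (by omega)
      have := h3 u (by omega) (by omega) hu3
      rw [e1, e2] at this; omega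
    have hcpos : 0 < O.count v := List.count_pos_iff.mpr hvO
    have hle2 : l.count v ≤ 2 := by
      by_contra hgt
      have h3le : 3 ≤ O.count v := by omega
      rcases Nat.even_or_odd a with he | ho
      · have := Nat.even_iff.mp he
        exact hS (a+1) (by omega) (by omega) (by omega)
      · have := Nat.odd_iff.mp ho
        exact hS (a+2) (by omega) (by omega) (by omega)
    refine ⟨hle2, ?_⟩
    intro h2c
    have hnOdd : nOdd l v = a := nOdd_eq l v
    rcases Nat.even_or_odd a with he | ho
    · exfalso
      have := Nat.even_iff.mp he
      exact hS (a+1) (by omega) (by omega) (by omega)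
    · rw [hnOdd]; exact Nat.odd_iff.mp ho
  · intro heven
    set O := oddParts l with hO
    set a := O.countP (fun y => decide (v < y)) with ha
    have hnOdd : nOdd l v = a := nOdd_eq l v
    rw [hnOdd]
    by_contra hpar
    have hae : a % 2 = 0 := by omega
    have hlne : l ≠ [] := List.ne_nil_of_mem hv
    have hlpos : 0 < l.length := List.length_pos_iff.mpr hlne
    have hhead_mem : l.getD 0 0 ∈ l := getD_mem hlpos
    have hheadodd := h1 hlne
    have hhv : v ≤ l.getD 0 0 := sorted_getD_zero_max hs hv
    have hheadO : l.getD 0 0 ∈ O := mem_oddParts.mpr ⟨hhead_mem, hheadodd⟩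
    have ha1 : 1 ≤ a := by
      rw [ha]
      apply List.countP_pos_iff.mpr
      exact ⟨l.getD 0 0, hheadO, by simp only [decide_eq_true_eq]; omega⟩
    have haS : a ≤ O.length := by rw [ha]; exact List.countP_le_length
    rcases eq_or_lt_of_le haS with heq | hlt
    · -- a = O.length : all odd parts > v; last part even; length even; contra h2
      have hmmem : l.getD (l.length - 1) 0 ∈ l := getD_mem (by omega)
      have hmlev : l.getD (l.length - 1) 0 ≤ v := sorted_getD_last_min hs hv
      have hlen2 : Even l.length := by
        have hp := length_parity hQ
        rw [Nat.even_iff, hp, ← heq]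
        omega
      have hmodd : l.getD (l.length - 1) 0 % 2 = 1 := h2 hlne hlen2
      have hmO : l.getD (l.length - 1) 0 ∈ O := mem_oddParts.mpr ⟨hmmem, hmodd⟩
      have hallO : ∀ y ∈ O, (fun y => decide (v < y)) y = true :=
        List.countP_eq_length.mp heq
      have := hallO _ hmO
      simp only [decide_eq_true_eq] at this
      omega
    · -- 1 ≤ a < O.length
      have hOa_mem : O.getD a 0 ∈ O := getD_mem hlt
      have hOa_odd : (O.getD a 0) % 2 = 1 := (mem_oddParts.mp hOa_mem).2
      have hOa_lt : O.getD a 0 < v := by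
        have hnot : ¬ ((fun y => decide (v < y)) (O.getD a 0) = true) := by
          intro hx
          have := (sorted_countP_iff hOs (mono_lt v) a hlt).mp hx
          omega
        simp only [decide_eq_true_eq] at hnot
        omega
      have hOa1_gt : v < O.getD (a - 1) 0 := by
        have := (sorted_countP_iff hOs (mono_lt v) (a - 1) (by omega)).mpr (by omega)
        simp only [decide_eq_true_eq] at this
        exact this
      obtain ⟨k, hk, hkv⟩ := List.mem_iff_getElem.mp hv
      have hgd : l.getD k 0 = v := by rw [List.getD_eq_getElem _ _ hk, hkv]
      have := h4 a (by omega) (by omega) hae k hk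
      rw [hgd] at this
      exact this ⟨hOa_lt, hOa1_gt⟩

lemma backward {l : List ℕ} (hQ : l ∈ Qset) (hcc : CountCond l) : l ∈ Rset := by
  have hs : l.Pairwise (· ≥ ·) := hQ.1.1
  have hOs : (oddParts l).Pairwise (· ≥ ·) := oddParts_sorted hs
  refine ⟨hQ, ?_, ?_, ?_, ?_⟩
  · intro hne
    by_contra hpar
    have hlpos : 0 < l.length := List.length_pos_iff.mpr hne
    have hmem : l.getD 0 0 ∈ l := getD_mem hlpos
    have heven : l.getD 0 0 % 2 = 0 := by omega
    have hodd := (hcc _ hmem).2 heven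
    have hpos : 0 < nOdd l (l.getD 0 0) := by omega
    obtain ⟨y, hy, hyp⟩ := List.countP_pos_iff.mp hpos
    simp only [oddGTp, Bool.and_eq_true, decide_eq_true_eq] at hyp
    have := sorted_getD_zero_max hs hy
    omega
  · intro hne hlen
    by_contra hpar
    have hlpos : 0 < l.length := List.length_pos_iff.mpr hne
    have hmem : l.getD (l.length - 1) 0 ∈ l := getD_mem (by omega)
    have heven : l.getD (l.length - 1) 0 % 2 = 0 := by omega
    have hodd := (hcc _ hmem).2 heven
    have hall : nOdd l (l.getD (l.length - 1) 0) = (oddParts l).length := by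
      rw [nOdd_eq]
      apply List.countP_eq_length.mpr
      intro y hyO
      obtain ⟨hy_mem, hy_odd⟩ := mem_oddParts.mp hyO
      have := sorted_getD_last_min hs hy_mem
      simp only [decide_eq_true_eq]
      omega
    rw [hall] at hodd
    have hp := length_parity hQ
    rw [Nat.even_iff] at hlen
    omega
  · intro u hu1 hu2 hu3
    set O := oddParts l with hO
    have hul : u < O.length := by omega
    have hle : O.getD u 0 ≤ O.getD (u - 1) 0 :=
      sorted_getD_antitone hOs (by omega) hul
    rcases lt_or_eq_of_le hle with h | h
    · exact h
    · exfalso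
      set v := O.getD u 0 with hv
      have hvO : v ∈ O := getD_mem hul
      obtain ⟨hv_mem, hv_odd⟩ := mem_oddParts.mp hvO
      have hcO : O.count v = l.count v := count_oddParts hv_odd
      have e1 := (sorted_getD_eq_iff hOs v hul).mp rfl
      have e2 := (sorted_getD_eq_iff hOs v (show u - 1 < O.length by omega)).mp h.symm
      have hle2 := ((hcc v hv_mem).1 hv_odd).1
      have hcnt2 : l.count v = 2 := by omega
      have hnodd := ((hcc v hv_mem).1 hv_odd).2 hcnt2
      rw [nOdd_eq, ← hO] at hnodd
      omega
  · intro u hu1 hu2 hu3 k hk hcontra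
    obtain ⟨hlow, hhigh⟩ := hcontra
    set O := oddParts l with hO
    set w := l.getD k 0 with hw
    have hw_mem : w ∈ l := getD_mem hk
    set aw := O.countP (fun y => decide (w < y)) with haw
    have h_up : u - 1 < aw := by
      apply (sorted_countP_iff hOs (mono_lt w) (u-1) (by omega)).mp
      simp only [decide_eq_true_eq]
      exact hhigh
    have h_dn : aw ≤ u := by
      by_contra hlt
      have := (sorted_countP_iff hOs (mono_lt w) u (by omega)).mpr (by omega)
      simp only [decide_eq_true_eq] at this
      omega
    by_cases hwodd : w % 2 = 1
    · have hwO : w ∈ O := mem_oddParts.mpr ⟨hw_mem, hwodd⟩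
      have hcpos : 0 < O.count w := List.count_pos_iff.mpr hwO
      have hblk : O.getD u 0 = w := sorted_getD_block hOs (by omega) (by omega)
      omega
    · have := (hcc w hw_mem).2 (by omega)
      rw [nOdd_eq, ← hO] at this
      omega


-- ==== stage 4: canonical decomposition ====

def cap (c : List ℕ) (v : ℕ) : ℕ :=
  if v % 2 = 1 then
    if c.count v % 2 = 1 then 1
    else if nOdd c v % 2 = 1 ∧ 2 ≤ c.count v then 2 else 0
  else if nOdd c v % 2 = 1 then c.count v else 0

lemma cap_le (c : List ℕ) (v : ℕ) : cap c v ≤ c.count v := by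
  unfold cap; split_ifs <;> omega

lemma cap_count_zero {c : List ℕ} {v : ℕ} (h : c.count v = 0) : cap c v = 0 := by
  unfold cap; split_ifs <;> omega

lemma cap_parity {c : List ℕ} (hQ : c ∈ Qset) (v : ℕ) :
    cap c v % 2 = c.count v % 2 := by
  have hev : v % 2 = 0 → Even (c.count v) := fun h => hQ.2 v h
  unfold cap
  split_ifs with h1 h2 h3 h4 <;> try omega
  · have := hev (by omega); rw [Nat.even_iff] at this; omega

def R0m (c : List ℕ) : Multiset ℕ :=
  ∑ v ∈ (Multiset.ofList c).toFinset, Multiset.replicate (cap c v) v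

lemma count_R0m (c : List ℕ) (v : ℕ) : (R0m c).count v = cap c v := by
  rw [R0m, Multiset.count_sum']
  by_cases hv : v ∈ (Multiset.ofList c).toFinset
  · rw [Finset.sum_eq_single v]
    · rw [Multiset.count_replicate, if_pos rfl]
    · intro b _ hb; rw [Multiset.count_replicate, if_neg hb]
    · intro h; exact absurd hv h
  · have hc0 : c.count v = 0 := by
      rw [List.count_eq_zero]
      intro hmem
      exact hv (by simpa [Multiset.mem_toFinset] using hmem)
    have hz : ∀ b ∈ (Multiset.ofList c).toFinset,
        (Multiset.replicate (cap c b) b).count v = 0 := by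
      intro b hb
      rw [Multiset.count_replicate, if_neg]
      intro h; subst h; exact hv hb
    rw [Finset.sum_congr rfl hz, Finset.sum_const_zero, cap_count_zero hc0]

lemma R0m_le (c : List ℕ) : R0m c ≤ Multiset.ofList c := by
  rw [Multiset.le_iff_count]
  intro v
  rw [count_R0m, Multiset.coe_count]
  exact cap_le c v

def P0m (c : List ℕ) : Multiset ℕ := Multiset.ofList c - R0m c

lemma count_P0m (c : List ℕ) (v : ℕ) : (P0m c).count v = c.count v - cap c v := by
  rw [P0m, Multiset.count_sub, count_R0m, Multiset.coe_count]

def r0 (c : List ℕ) : List ℕ := Multiset.sort (R0m c) (· ≥ ·)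
def p0 (c : List ℕ) : List ℕ := Multiset.sort (P0m c) (· ≥ ·)

lemma r0_sorted (c : List ℕ) : (r0 c).Pairwise (· ≥ ·) := Multiset.pairwise_sort _ _
lemma p0_sorted (c : List ℕ) : (p0 c).Pairwise (· ≥ ·) := Multiset.pairwise_sort _ _

lemma r0_count (c : List ℕ) (v : ℕ) : (r0 c).count v = cap c v := by
  rw [← Multiset.coe_count, r0, Multiset.sort_eq, count_R0m]

lemma p0_count (c : List ℕ) (v : ℕ) : (p0 c).count v = c.count v - cap c v := by
  rw [← Multiset.coe_count, p0, Multiset.sort_eq, count_P0m]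

lemma r0_mem_c {c : List ℕ} {x : ℕ} (hx : x ∈ r0 c) : x ∈ c := by
  have h1 : x ∈ R0m c := (Multiset.mem_sort (r := (· ≥ ·))).mp hx
  have := Multiset.mem_of_le (R0m_le c) h1
  simpa using this

lemma p0_mem_c {c : List ℕ} {x : ℕ} (hx : x ∈ p0 c) : x ∈ c := by
  have h1 : x ∈ P0m c := (Multiset.mem_sort (r := (· ≥ ·))).mp hx
  have := Multiset.mem_of_le (Multiset.sub_le_self _ _) h1
  simpa using this

lemma r0_p0_perm (c : List ℕ) : (r0 c ++ p0 c) ~ c := by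
  rw [List.perm_iff_count]
  intro v
  rw [List.count_append, r0_count, p0_count]
  have := cap_le c v
  omega

lemma pmerge_eq_of_perm {r p c : List ℕ} (hperm : (r ++ p) ~ c)
    (hcs : c.Pairwise (· ≥ ·)) : pmerge r p = c := by
  apply List.Perm.eq_of_pairwise' (r := (· ≥ ·))
  · have hms := List.pairwise_mergeSort
      (le := fun a b : ℕ => decide (b ≤ a))
      (fun a b c h1 h2 => by simp at *; omega)
      (fun a b => by simp; omega)
      (r ++ p)
    exact List.Pairwise.imp (fun h => by simpa using of_decide_eq_true h) hms
  · exact hcs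
  · exact (List.mergeSort_perm (r ++ p) _).trans hperm

lemma perm_of_pmerge {r p c : List ℕ} (h : pmerge r p = c) : (r ++ p) ~ c := by
  rw [← h]
  exact (List.mergeSort_perm (r ++ p) _).symm

lemma Ptilde_even_countP {p : List ℕ} (hp : p ∈ Ptilde) (q : ℕ → Bool) :
    Even (p.countP q) := paired_even_countP p hp.2.1 hp.2.2 q

lemma Ptilde_even_count {p : List ℕ} (hp : p ∈ Ptilde) (v : ℕ) :
    Even (p.count v) := by
  rw [List.count_eq_countP]
  exact Ptilde_even_countP hp _

lemma fiber_count {r p c : List ℕ} (h : pmerge r p = c) (v : ℕ) :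
    c.count v = r.count v + p.count v := by
  rw [← (perm_of_pmerge h).count_eq, List.count_append]

lemma fiber_nOdd_parity {r p c : List ℕ} (h : pmerge r p = c) (hp : p ∈ Ptilde) (v : ℕ) :
    nOdd r v % 2 = nOdd c v % 2 := by
  have h1 : c.countP (oddGTp v) = r.countP (oddGTp v) + p.countP (oddGTp v) := by
    rw [← (perm_of_pmerge h).countP_eq, List.countP_append]
  have h2 := Ptilde_even_countP hp (oddGTp v)
  rw [Nat.even_iff] at h2
  unfold nOdd
  omega

lemma count_le_cap {c r p : List ℕ} (hr : r ∈ Rset) (hp : p ∈ Ptilde)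
    (hmerge : pmerge r p = c) : ∀ v, r.count v ≤ cap c v := by
  intro v
  have hcc := forward hr
  have hsum := fiber_count hmerge v
  have hpe := Ptilde_even_count hp v
  rw [Nat.even_iff] at hpe
  have hnp := fiber_nOdd_parity hmerge hp v
  rcases Nat.eq_zero_or_pos (r.count v) with h0 | hpos
  · simp [h0]
  · have hv_mem : v ∈ r := List.count_pos_iff.mp hpos
    have hthis := hcc v hv_mem
    by_cases hodd : v % 2 = 1
    · obtain ⟨hle2, h2imp⟩ := hthis.1 hodd
      unfold cap
      rw [if_pos hodd]
      by_cases hcv : c.count v % 2 = 1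
      · rw [if_pos hcv]; omega
      · rw [if_neg hcv]
        have h2 : r.count v = 2 := by omega
        have hno := h2imp h2
        rw [if_pos ⟨by omega, by omega⟩]
        omega
    · have hnv := hthis.2 (by omega)
      unfold cap
      rw [if_neg hodd, if_pos (by omega)]
      omega

lemma length_eq_sum_counts {c r : List ℕ} (h : ∀ v, r.count v ≤ c.count v) :
    r.length = ∑ v ∈ (Multiset.ofList c).toFinset, r.count v := by
  have h1 : r.length = ∑ v ∈ (Multiset.ofList r).toFinset, r.count v := by
    have h2 := Multiset.toFinset_sum_count_eq (Multiset.ofList r)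
    simp only [Multiset.coe_count] at h2
    rw [h2]
    simp
  rw [h1]
  apply Finset.sum_subset
  · intro x hx
    rw [Multiset.mem_toFinset, Multiset.mem_coe] at *
    have hpos : 0 < r.count x := List.count_pos_iff.mpr hx
    have := h x
    exact List.count_pos_iff.mp (by omega)
  · intro x _ hxr
    rw [Multiset.mem_toFinset, Multiset.mem_coe] at hxr
    exact List.count_eq_zero_of_not_mem hxr

end Stmt6Aux

theorem stmt6 (m : ℕ) (c : List ℕ) (hc : c ∈ QN m) :
    ∃! rp : List ℕ × List ℕ,
      (rp ∈ An m ∧ pmerge rp.1 rp.2 = c) ∧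
      ∀ rp' : List ℕ × List ℕ, (rp' ∈ An m ∧ pmerge rp'.1 rp'.2 = c) →
        rp.2.length ≤ rp'.2.length := by
  obtain ⟨hQ, hcsum⟩ := hc
  have hcs : c.Pairwise (· ≥ ·) := hQ.1.1
  have hr0count := r0_count c
  have hp0count := p0_count c
  have hperm := r0_p0_perm c
  have hmerge0 : pmerge (r0 c) (p0 c) = c := pmerge_eq_of_perm hperm hcs
  have hp0Pt : p0 c ∈ Ptilde := by
    have hps := p0_sorted c
    have hppos : ∀ x ∈ p0 c, 0 < x := fun x hx => hQ.1.2 x (p0_mem_c hx)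
    have hpev : ∀ v, Even ((p0 c).count v) := by
      intro v
      rw [hp0count v]
      have h1 := cap_parity hQ v
      have h2 := cap_le c v
      rw [Nat.even_iff]
      omega
    obtain ⟨hlen, hpair⟩ := paired_of_even_counts (p0 c) hps hpev
    exact ⟨⟨hps, hppos⟩, hlen, hpair⟩
  have hr0Q : r0 c ∈ Qset := by
    refine ⟨⟨r0_sorted c, fun x hx => hQ.1.2 x (r0_mem_c hx)⟩, ?_⟩
    intro j hj
    rw [hr0count j]
    unfold cap
    rw [if_neg (by omega)]
    split_ifs with h
    · exact hQ.2 j hj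
    · exact Even.zero
  have hr0R : r0 c ∈ Rset := by
    apply backward hr0Q
    intro v hv
    have hpos : 0 < (r0 c).count v := List.count_pos_iff.mpr hv
    have hcnt := hr0count v
    have hnp := fiber_nOdd_parity hmerge0 hp0Pt v
    constructor
    · intro hodd
      rw [cap, if_pos hodd] at hcnt
      split_ifs at hcnt with h1 h2 <;> omega
    · intro heven
      rw [cap, if_neg (by omega)] at hcnt
      split_ifs at hcnt with h1 <;> omega
  have hsum0 : (r0 c).sum + (p0 c).sum = m := by
    rw [← List.sum_append, hperm.sum_eq, hcsum]
  have hAn : (r0 c, p0 c) ∈ An m := ⟨hr0R, hp0Pt, hsum0⟩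
  have hbound : ∀ rp' : List ℕ × List ℕ, (rp' ∈ An m ∧ pmerge rp'.1 rp'.2 = c) →
      (p0 c).length ≤ rp'.2.length := by
    rintro ⟨r, p⟩ ⟨⟨hrR, hpPt, _⟩, hmrg⟩
    dsimp only at hrR hpPt hmrg ⊢
    have hcle := count_le_cap hrR hpPt hmrg
    have hrc : ∀ v, r.count v ≤ c.count v := fun v => le_trans (hcle v) (cap_le c v)
    have hr0c : ∀ v, (r0 c).count v ≤ c.count v := fun v => by
      rw [hr0count]; exact cap_le c v
    have hlenr := length_eq_sum_counts hrc
    have hlenr0 := length_eq_sum_counts hr0c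
    have hsumle : r.length ≤ (r0 c).length := by
      rw [hlenr, hlenr0]
      apply Finset.sum_le_sum
      intro v _
      rw [hr0count]
      exact hcle v
    have hl1 : r.length + p.length = c.length := by
      rw [← List.length_append]
      exact (perm_of_pmerge hmrg).length_eq
    have hl0 : (r0 c).length + (p0 c).length = c.length := by
      rw [← List.length_append]
      exact hperm.length_eq
    omega
  refine ⟨(r0 c, p0 c), ⟨⟨hAn, hmerge0⟩, hbound⟩, ?_⟩
  rintro ⟨r, p⟩ ⟨⟨hAn', hmrg⟩, hmin⟩
  obtain ⟨hrR', hpPt', hsum'⟩ := hAn'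
  dsimp only at hrR' hpPt' hsum' hmrg hmin
  have hAn' : (r, p) ∈ An m := ⟨hrR', hpPt', hsum'⟩
  have hpeq : p.length = (p0 c).length :=
    le_antisymm (hmin (r0 c, p0 c) ⟨hAn, hmerge0⟩) (hbound (r, p) ⟨hAn', hmrg⟩)
  have hcle := count_le_cap hrR' hpPt' hmrg
  have hrc : ∀ v, r.count v ≤ c.count v := fun v => le_trans (hcle v) (cap_le c v)
  have hr0c : ∀ v, (r0 c).count v ≤ c.count v := fun v => by
    rw [hr0count]; exact cap_le c v
  have hlenr := length_eq_sum_counts hrc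
  have hlenr0 := length_eq_sum_counts hr0c
  have hl1 : r.length + p.length = c.length := by
    rw [← List.length_append]
    exact (perm_of_pmerge hmrg).length_eq
  have hl0 : (r0 c).length + (p0 c).length = c.length := by
    rw [← List.length_append]
    exact hperm.length_eq
  have hreq : r.length = (r0 c).length := by omega
  have hlenr0' : (r0 c).length = ∑ v ∈ (Multiset.ofList c).toFinset, cap c v := by
    rw [hlenr0]
    exact Finset.sum_congr rfl (fun v _ => hr0count v)
  have hsumeq : ∑ v ∈ (Multiset.ofList c).toFinset, r.count v
      = ∑ v ∈ (Multiset.ofList c).toFinset, cap c v := by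
    rw [← hlenr, hreq, hlenr0']
  have heqv := (Finset.sum_eq_sum_iff_of_le (fun v _ => hcle v)).mp hsumeq
  have hallv : ∀ v, r.count v = (r0 c).count v := by
    intro v
    rw [hr0count]
    by_cases hv : v ∈ (Multiset.ofList c).toFinset
    · exact heqv v hv
    · have hc0 : c.count v = 0 := by
        rw [List.count_eq_zero]
        intro hmem
        exact hv (by simpa [Multiset.mem_toFinset] using hmem)
      have h1 := hcle v
      rw [cap_count_zero hc0] at h1 ⊢
      omega
  have hr_eq : r = r0 c :=
    List.Perm.eq_of_pairwise' hrR'.1.1.1 (r0_sorted c) (List.perm_iff_count.mpr hallv)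
  have hallp : ∀ v, p.count v = (p0 c).count v := by
    intro v
    have h1 := fiber_count hmrg v
    have h2 := fiber_count hmerge0 v
    have h3 := hallv v
    omega
  have hp_eq : p = p0 c :=
    List.Perm.eq_of_pairwise' hpPt'.1.1 (p0_sorted c) (List.perm_iff_count.mpr hallp)
  rw [Prod.mk.injEq]
  exact ⟨hr_eq, hp_eq⟩
end

section
/- For every natural number 𝐧 and every c_* ∈ 𝒬_𝐧, there exists an element (r_*, p_*) ∈ ι̃^{-1}(c_*) ⊆ A_𝐧 such that μ_e(p'_*) ≥ μ_e(p_*) for every (r'_*, p'_*) ∈ ι̃^{-1}(c_*) and every positive integer e; moreover, if (r'_*, p'_*) ∈ ι̃^{-1}(c_*) satisfies μ_e(p'_*) = μ_e(p_*) for all positive integers e, then (r'_*, p'_*) = (r_*, p_*). -/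
namespace Stmt7Aux

/-- parity congruence of map-sums -/
lemma map_sum_parity {d : List ℕ} {f g : ℕ → ℕ}
    (h : ∀ w ∈ d, f w % 2 = g w % 2) :
    (d.map f).sum % 2 = (d.map g).sum % 2 := by
  induction d with
  | nil => rfl
  | cons a t ih =>
    simp only [List.map_cons, List.sum_cons]
    have h1 := h a (by simp)
    have h2 := ih (fun w hw => h w (by simp [hw]))
    omega

lemma countP_replicate (Q : ℕ → Bool) (n w : ℕ) :
    (List.replicate n w).countP Q = if Q w then n else 0 := by
  induction n with
  | zero => simp
  | succ k ih =>
    rw [List.replicate_succ, List.countP_cons, ih]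
    by_cases h : Q w <;> simp [h]

lemma countP_flatMap (d : List ℕ) (g : ℕ → ℕ) (Q : ℕ → Bool) :
    ((d.flatMap fun w => List.replicate (g w) w).countP Q)
      = (d.map (fun w => if Q w then g w else 0)).sum := by
  induction d with
  | nil => simp
  | cons a t ih =>
    simp only [List.flatMap_cons, List.countP_append, List.map_cons, List.sum_cons, ih,
      countP_replicate]

lemma count_flatMap {d : List ℕ} (hd : d.Nodup) (g : ℕ → ℕ) (v : ℕ) :
    ((d.flatMap fun w => List.replicate (g w) w).count v)
      = if v ∈ d then g v else 0 := by
  induction d with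
  | nil => simp
  | cons a t ih =>
    simp only [List.flatMap_cons, List.count_append]
    rcases List.nodup_cons.mp hd with ⟨ha, ht⟩
    rw [ih ht, List.count_replicate]
    by_cases hva : v = a
    · subst hva
      simp [ha]
    · simp [hva, Ne.symm hva]

lemma perm_flat {l d : List ℕ} (hd : d.Nodup) (hsub : ∀ w ∈ l, w ∈ d) :
    l.Perm (d.flatMap fun w => List.replicate (l.count w) w) := by
  rw [List.perm_iff_count]
  intro v
  rw [count_flatMap hd]
  by_cases hv : v ∈ d
  · simp [hv]
  · simp only [hv, if_false]
    rw [List.count_eq_zero]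
    exact fun hmem => hv (hsub v hmem)

/-- central parity lemma: countP parities agree if counts agree mod 2 on Q -/
lemma countP_parity {l₁ l₂ : List ℕ} (Q : ℕ → Bool)
    (h : ∀ w, Q w = true → l₁.count w % 2 = l₂.count w % 2) :
    l₁.countP Q % 2 = l₂.countP Q % 2 := by
  set d := (l₁ ++ l₂).dedup with hd
  have hnd : d.Nodup := List.nodup_dedup _
  have hp1 := perm_flat hnd (l := l₁) (fun w hw => by simp [hd, List.mem_dedup, hw])
  have hp2 := perm_flat hnd (l := l₂) (fun w hw => by simp [hd, List.mem_dedup, hw])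
  rw [hp1.countP_eq Q, hp2.countP_eq Q, countP_flatMap, countP_flatMap]
  apply map_sum_parity
  intro w hw
  by_cases hq : Q w
  · simpa [hq] using h w hq
  · simp [hq]

lemma flat_sorted {d : List ℕ} (hd : d.Pairwise (· > ·)) (g : ℕ → ℕ) :
    (d.flatMap fun w => List.replicate (g w) w).Pairwise (· ≥ ·) := by
  induction d with
  | nil => simp
  | cons a t ih =>
    rcases List.pairwise_cons.mp hd with ⟨ha, ht⟩
    simp only [List.flatMap_cons]
    rw [List.pairwise_append]
    refine ⟨?_, ih ht, ?_⟩
    · exact List.pairwise_replicate.mpr (Or.inr le_rfl)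
    · intro x hx y hy
      have hxa : x = a := List.eq_of_mem_replicate hx
      rcases List.mem_flatMap.mp hy with ⟨w, hw, hyw⟩
      have hyw' : y = w := List.eq_of_mem_replicate hyw
      subst hxa; subst hyw'
      exact le_of_lt (ha _ hw)

lemma sorted_rel {l : List ℕ} (hs : l.Pairwise (· ≥ ·)) {i j : ℕ} (hij : i ≤ j)
    (hj : j < l.length) : l[j]'hj ≤ l[i]'(lt_of_le_of_lt hij hj) := by
  rcases eq_or_lt_of_le hij with h | h
  · subst h; exact le_rfl
  · exact List.pairwise_iff_getElem.mp hs i j _ hj h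

/-- for a monotone predicate on a sorted-descending list, truth at an index is
equivalent to the index being below the count -/
lemma sorted_countP_iff {P : ℕ → Bool} (hP : ∀ x y, x ≤ y → P x = true → P y = true) :
    ∀ {l : List ℕ}, l.Pairwise (· ≥ ·) → ∀ i (h : i < l.length),
      (P (l[i]'h) = true ↔ i < l.countP P) := by
  intro l
  induction l with
  | nil => intro _ i h; simp at h
  | cons a t ih =>
    intro hs i h
    rcases List.pairwise_cons.mp hs with ⟨hat, hts⟩
    rw [List.countP_cons]
    by_cases hPa : P a = true
    · simp only [hPa, if_true]
      cases i with
      | zero => simp [hPa]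
      | succ i =>
        have h' : i < t.length := by simpa using h
        rw [List.getElem_cons_succ]
        rw [ih hts i h']
        omega
    · have ht0 : t.countP P = 0 := by
        rw [List.countP_eq_zero]
        intro x hx hPx
        exact hPa (hP x a (hat x hx) hPx)
      cases i with
      | zero => simp [hPa, ht0]
      | succ i =>
        have h' : i < t.length := by simpa using h
        rw [List.getElem_cons_succ]
        constructor
        · intro hPx
          exact absurd (hP _ a (hat _ (List.getElem_mem h')) hPx) hPa
        · intro hlt; simp [hPa, ht0] at hlt

lemma countP_le_split (w : ℕ) (l : List ℕ) :
    l.countP (fun x => decide (w ≤ x)) = l.countP (fun x => decide (w < x)) + l.count w := by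
  induction l with
  | nil => simp
  | cons a t ih =>
    rw [List.countP_cons, List.countP_cons, List.count_cons, ih]
    by_cases h1 : w ≤ a <;> by_cases h2 : w < a <;> by_cases h3 : a = w <;>
      simp [h1, h2, h3] <;> omega

lemma sorted_getElem_lt_iff {l : List ℕ} (hs : l.Pairwise (· ≥ ·)) (w : ℕ) {i : ℕ}
    (h : i < l.length) : w < l[i]'h ↔ i < l.countP (fun x => decide (w < x)) := by
  have := sorted_countP_iff (P := fun x => decide (w < x))
    (fun x y hxy hx => by simp at hx ⊢; omega) hs i h
  simpa using this

lemma sorted_getElem_le_iff {l : List ℕ} (hs : l.Pairwise (· ≥ ·)) (w : ℕ) {i : ℕ}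
    (h : i < l.length) : w ≤ l[i]'h ↔ i < l.countP (fun x => decide (w ≤ x)) := by
  have := sorted_countP_iff (P := fun x => decide (w ≤ x))
    (fun x y hxy hx => by simp at hx ⊢; omega) hs i h
  simpa using this

/-- block characterization of positions of a value in a sorted-descending list -/
lemma sorted_getElem_eq_iff {l : List ℕ} (hs : l.Pairwise (· ≥ ·)) (w : ℕ) {i : ℕ}
    (h : i < l.length) :
    l[i]'h = w ↔ (l.countP (fun x => decide (w < x)) ≤ i ∧
      i < l.countP (fun x => decide (w < x)) + l.count w) := by
  rw [← countP_le_split]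
  constructor
  · intro he
    constructor
    · by_contra hlt
      push_neg at hlt
      have := (sorted_getElem_lt_iff hs w h).mpr hlt
      omega
    · exact (sorted_getElem_le_iff hs w h).mp (le_of_eq he.symm)
  · rintro ⟨h1, h2⟩
    have hle : w ≤ l[i]'h := (sorted_getElem_le_iff hs w h).mpr h2
    have hnlt : ¬ w < l[i]'h := fun hl => by
      have := (sorted_getElem_lt_iff hs w h).mp hl
      omega
    omega

/-- a sorted list in which every value has even multiplicity has even length
and pairs up -/
lemma evl_aux : ∀ n (l : List ℕ), l.length ≤ n → l.Pairwise (· ≥ ·) →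
    (∀ v, Even (l.count v)) → Even l.length ∧ ∀ i, l.getD (2*i) 0 = l.getD (2*i+1) 0 := by
  intro n
  induction n with
  | zero =>
    intro l hl _ _
    have : l = [] := List.length_eq_zero_iff.mp (Nat.le_zero.mp hl)
    subst this
    simp
  | succ n ih =>
    intro l hl hs hev
    cases l with
    | nil => simp
    | cons a t =>
      have hca : Even ((a :: t).count a) := hev a
      have hcat : (a :: t).count a = t.count a + 1 := by simp [List.count_cons]
      have hmem : a ∈ t := by
        rw [← List.count_pos_iff]
        rcases hca with ⟨k, hk⟩
        omega
      cases t with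
      | nil => simp at hmem
      | cons b t2 =>
        rcases List.pairwise_cons.mp hs with ⟨hat, hts⟩
        rcases List.pairwise_cons.mp hts with ⟨hbt, ht2⟩
        have hba : b = a := by
          have h1 : a ≥ b := hat b (by simp)
          have h2 : b ≥ a := by
            rcases List.mem_cons.mp hmem with h | h
            · omega
            · exact hbt a h
          omega
        subst hba
        have hlen2 : t2.length ≤ n := by
          simp at hl
          omega
        have hev2 : ∀ v, Even (t2.count v) := by
          intro v
          have hcv := hev v
          by_cases hv : v = b
          · subst hv
            rw [show List.count v (v :: v :: t2) = t2.count v + 2 by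
              simp [List.count_cons]] at hcv
            rcases hcv with ⟨k, hk⟩
            exact ⟨k - 1, by omega⟩
          · rwa [show List.count v (b :: b :: t2) = t2.count v by
              simp [List.count_cons, Ne.symm hv]] at hcv
        rcases ih t2 hlen2 ht2 hev2 with ⟨hlen, hpair⟩
        constructor
        · rcases hlen with ⟨k, hk⟩
          exact ⟨k + 1, by simp [hk]; omega⟩
        · intro i
          cases i with
          | zero => simp
          | succ j =>
            have h1 : 2 * (j + 1) = 2 * j + 1 + 1 := by ring
            rw [h1, List.getD_cons_succ, List.getD_cons_succ,
              List.getD_cons_succ, List.getD_cons_succ]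
            exact hpair j

lemma evl {l : List ℕ} (hs : l.Pairwise (· ≥ ·)) (hev : ∀ v, Even (l.count v)) :
    Even l.length ∧ ∀ i, l.getD (2*i) 0 = l.getD (2*i+1) 0 :=
  evl_aux l.length l le_rfl hs hev

/-- converse: a sorted list of even length that pairs up has all multiplicities even -/
lemma evl'_aux : ∀ n (l : List ℕ), l.length ≤ n → l.Pairwise (· ≥ ·) → Even l.length →
    (∀ i, l.getD (2*i) 0 = l.getD (2*i+1) 0) → ∀ v, Even (l.count v) := by
  intro n
  induction n with
  | zero =>
    intro l hl _ _ _ v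
    have : l = [] := List.length_eq_zero_iff.mp (Nat.le_zero.mp hl)
    subst this; simp
  | succ n ih =>
    intro l hl hs hevl hpair v
    cases l with
    | nil => simp
    | cons a t =>
      cases t with
      | nil => rcases hevl with ⟨k, hk⟩; simp at hk; omega
      | cons b t2 =>
        have hab : a = b := by
          have := hpair 0
          simpa using this
        subst hab
        rcases List.pairwise_cons.mp hs with ⟨hat, hts⟩
        rcases List.pairwise_cons.mp hts with ⟨hbt, ht2⟩
        have hlen2 : t2.length ≤ n := by simp at hl; omega
        have hevl2 : Even t2.length := by
          rcases hevl with ⟨k, hk⟩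
          simp at hk
          exact ⟨k - 1, by omega⟩
        have hpair2 : ∀ i, t2.getD (2*i) 0 = t2.getD (2*i+1) 0 := by
          intro i
          have := hpair (i + 1)
          have h1 : 2 * (i + 1) = 2 * i + 1 + 1 := by ring
          rw [h1, List.getD_cons_succ, List.getD_cons_succ,
            List.getD_cons_succ, List.getD_cons_succ] at this
          exact this
        have := ih t2 hlen2 ht2 hevl2 hpair2 v
        by_cases hv : v = a
        · subst hv
          have : (v :: v :: t2).count v = t2.count v + 2 := by
            simp [List.count_cons]
          rw [this]
          rcases ih t2 hlen2 ht2 hevl2 hpair2 v with ⟨k, hk⟩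
          exact ⟨k + 1, by omega⟩
        · have : (a :: a :: t2).count v = t2.count v := by
            simp [List.count_cons, Ne.symm hv]
          rw [this]
          exact ih t2 hlen2 ht2 hevl2 hpair2 v

lemma evl' {l : List ℕ} (hs : l.Pairwise (· ≥ ·)) (hevl : Even l.length)
    (hpair : ∀ i, l.getD (2*i) 0 = l.getD (2*i+1) 0) : ∀ v, Even (l.count v) :=
  evl'_aux l.length l le_rfl hs hevl hpair


-- specific layer
def scount (c : List ℕ) (v : ℕ) : ℕ :=
  c.countP (fun w => decide (v < w) && decide (w % 2 = 1))

def rc (c : List ℕ) (v : ℕ) : ℕ :=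
  if v % 2 = 1 then
    (if c.count v % 2 = 1 then 1
     else if scount c v % 2 = 1 ∧ 2 ≤ c.count v then 2 else 0)
  else (if scount c v % 2 = 1 then c.count v else 0)

def rl (c : List ℕ) : List ℕ := c.dedup.flatMap (fun w => List.replicate (rc c w) w)

def pl (c : List ℕ) : List ℕ :=
  c.dedup.flatMap (fun w => List.replicate (c.count w - rc c w) w)

lemma rc_le_count (c : List ℕ) (v : ℕ) : rc c v ≤ c.count v := by
  rw [rc]
  by_cases h1 : v % 2 = 1
  · rw [if_pos h1]
    by_cases h2 : c.count v % 2 = 1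
    · rw [if_pos h2]; omega
    · rw [if_neg h2]; split <;> omega
  · rw [if_neg h1]; split <;> omega

lemma rc_le_two (c : List ℕ) {v : ℕ} (hv : v % 2 = 1) : rc c v ≤ 2 := by
  rw [rc, if_pos hv]
  split
  · omega
  · split <;> omega

lemma rc_parity (c : List ℕ) {v : ℕ} (hv : v % 2 = 1) :
    rc c v % 2 = c.count v % 2 := by
  rw [rc, if_pos hv]
  by_cases h2 : c.count v % 2 = 1
  · rw [if_pos h2]; omega
  · rw [if_neg h2]; split <;> omega

lemma rc_eq_two (c : List ℕ) {v : ℕ} (hv : v % 2 = 1) (h : rc c v = 2) :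
    scount c v % 2 = 1 ∧ 2 ≤ c.count v := by
  rw [rc, if_pos hv] at h
  split at h
  · omega
  · split at h
    · assumption
    · omega

lemma rc_even_pos (c : List ℕ) {v : ℕ} (hv : v % 2 = 0) (h : rc c v ≠ 0) :
    scount c v % 2 = 1 ∧ rc c v = c.count v := by
  have h1 : ¬ (v % 2 = 1) := by omega
  rw [rc, if_neg h1] at h ⊢
  by_cases h2 : scount c v % 2 = 1
  · rw [if_pos h2] at h ⊢; exact ⟨h2, rfl⟩
  · rw [if_neg h2] at h; exact absurd rfl h

lemma dedup_pairwise {c : List ℕ} (hs : c.Pairwise (· ≥ ·)) :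
    c.dedup.Pairwise (· > ·) := by
  have h1 : c.dedup.Pairwise (· ≥ ·) := List.Pairwise.sublist (c.dedup_sublist) hs
  have h2 : c.dedup.Pairwise (· ≠ ·) := c.nodup_dedup
  exact (h1.and h2).imp (fun h => lt_of_le_of_ne h.1.le (Ne.symm h.2))

lemma count_rl (c : List ℕ) (v : ℕ) : (rl c).count v = rc c v := by
  rw [rl, count_flatMap c.nodup_dedup]
  by_cases hv : v ∈ c.dedup
  · simp [hv]
  · simp only [hv, if_false]
    have hvc : v ∉ c := fun h => hv (List.mem_dedup.mpr h)
    have h0 : c.count v = 0 := List.count_eq_zero.mpr hvc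
    unfold rc
    rw [h0]
    by_cases h1 : v % 2 = 1 <;> simp [h1]

lemma count_pl (c : List ℕ) (v : ℕ) : (pl c).count v = c.count v - rc c v := by
  rw [pl, count_flatMap c.nodup_dedup]
  by_cases hv : v ∈ c.dedup
  · simp [hv]
  · simp only [hv, if_false]
    have hvc : v ∉ c := fun h => hv (List.mem_dedup.mpr h)
    have h0 : c.count v = 0 := List.count_eq_zero.mpr hvc
    omega

lemma rl_sorted {c : List ℕ} (hs : c.Pairwise (· ≥ ·)) : (rl c).Pairwise (· ≥ ·) :=
  flat_sorted (dedup_pairwise hs) _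

lemma pl_sorted {c : List ℕ} (hs : c.Pairwise (· ≥ ·)) : (pl c).Pairwise (· ≥ ·) :=
  flat_sorted (dedup_pairwise hs) _

lemma mem_flat_sub {d : List ℕ} {g : ℕ → ℕ} {x : ℕ}
    (hx : x ∈ d.flatMap (fun w => List.replicate (g w) w)) : x ∈ d := by
  rcases List.mem_flatMap.mp hx with ⟨w, hw, hxw⟩
  rw [List.eq_of_mem_replicate hxw]
  exact hw

lemma rl_mem_c {c : List ℕ} {x : ℕ} (hx : x ∈ rl c) : x ∈ c :=
  List.mem_dedup.mp (mem_flat_sub hx)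

lemma pl_mem_c {c : List ℕ} {x : ℕ} (hx : x ∈ pl c) : x ∈ c :=
  List.mem_dedup.mp (mem_flat_sub hx)

lemma rl_pl_perm (c : List ℕ) : (rl c ++ pl c).Perm c := by
  rw [List.perm_iff_count]
  intro v
  rw [List.count_append, count_rl, count_pl]
  have := rc_le_count c v
  omega

/-- the number of odd parts above `v` in a list with count-parities matching `c`
has parity `scount c v` -/
lemma oddAbove_parity {c l : List ℕ} (v : ℕ)
    (h : ∀ w, w % 2 = 1 → l.count w % 2 = c.count w % 2) :
    (oddParts l).countP (fun x => decide (v < x)) % 2 = scount c v % 2 := by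
  have h1 : (oddParts l).countP (fun x => decide (v < x))
      = l.countP (fun w => decide (v < w) && decide (w % 2 = 1)) := by
    rw [oddParts, List.countP_eq_length_filter, List.countP_eq_length_filter,
      List.filter_filter]
  rw [h1, scount]
  apply countP_parity
  intro w hw
  simp only [Bool.and_eq_true, decide_eq_true_eq] at hw
  exact h w hw.2

lemma rl_count_parity (c : List ℕ) : ∀ w, w % 2 = 1 →
    (rl c).count w % 2 = c.count w % 2 := by
  intro w hw
  rw [count_rl]
  exact rc_parity c hw


lemma countP_not_split (l : List ℕ) (p : ℕ → Bool) :
    l.countP p + l.countP (fun a => !p a) = l.length := by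
  induction l with
  | nil => simp
  | cons a t ih =>
    rw [List.countP_cons, List.countP_cons, List.length_cons]
    by_cases h : p a <;> simp [h] <;> omega

lemma oddParts_sorted {l : List ℕ} (hs : l.Pairwise (· ≥ ·)) :
    (oddParts l).Pairwise (· ≥ ·) := hs.filter _

lemma mem_oddParts {l : List ℕ} {x : ℕ} :
    x ∈ oddParts l ↔ x ∈ l ∧ x % 2 = 1 := by
  simp [oddParts, List.mem_filter]

lemma count_oddParts {l : List ℕ} {x : ℕ} (hx : x % 2 = 1) :
    (oddParts l).count x = l.count x := by
  rw [oddParts]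
  exact List.count_filter (by simpa using hx)

/-- The key structural facts about a member of `Rset` with count parities matching `c`:
each count is at most `rc c`. -/
lemma key_bound {c r' : List ℕ}
    (hle : ∀ w, r'.count w ≤ c.count w)
    (hparity : ∀ w, w % 2 = 1 → r'.count w % 2 = c.count w % 2)
    (hr : r' ∈ Rset) : ∀ v, r'.count v ≤ rc c v := by
  obtain ⟨⟨⟨hr's, hr'pos⟩, hr'q⟩, hi, hii, hiii, hiv⟩ := hr
  set o' := oddParts r' with ho'
  have ho's : o'.Pairwise (· ≥ ·) := oddParts_sorted hr's
  have hpar' : ∀ v, o'.countP (fun x => decide (v < x)) % 2 = scount c v % 2 :=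
    fun v => oddAbove_parity v hparity
  intro v
  rcases Nat.mod_two_eq_zero_or_one v with hv | hv
  · -- v even
    set cnt := r'.count v with hcnt
    have hcnt_even : Even cnt := hr'q v hv
    by_cases hc0 : cnt = 0
    · omega
    have hvr : v ∈ r' := by rw [← List.count_pos_iff]; omega
    obtain ⟨k, hk, hkv⟩ := List.mem_iff_getElem.mp hvr
    have hne : r' ≠ [] := List.ne_nil_of_mem hvr
    set gt := o'.countP (fun x => decide (v < x)) with hgt
    -- first, gt ≥ 1
    have hlen0 : 0 < r'.length := List.length_pos_iff.mpr hne
    have hhead : r'.getD 0 0 % 2 = 1 := hi hne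
    rw [List.getD_eq_getElem _ _ hlen0] at hhead
    have hheadmem : r'[0] ∈ o' := mem_oddParts.mpr ⟨List.getElem_mem hlen0, hhead⟩
    have hhead_ge : v ≤ r'[0] := by
      have := sorted_rel hr's (Nat.zero_le k) hk
      omega
    have hgt1 : 1 ≤ gt := by
      rw [hgt]
      rw [Nat.succ_le, List.countP_pos_iff]
      exact ⟨r'[0], hheadmem, by simp; omega⟩
    have hgt_odd : gt % 2 = 1 := by
      by_contra hge'
      have hge : gt % 2 = 0 := by omega
      have hgtlen : gt ≤ o'.length := List.countP_le_length
      rcases lt_or_eq_of_le hgtlen with hlt | heq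
      · -- gt < |o'| : use condition (iv)
        have h0 : gt - 1 < o'.length := by omega
        have happ := hiv gt hgt1 (by omega) hge k hk
        rw [List.getD_eq_getElem _ _ hlt, List.getD_eq_getElem _ _ h0,
          List.getD_eq_getElem _ _ hk, hkv] at happ
        apply happ
        constructor
        · -- o'[gt] < v
          have hnot : ¬ (v < o'[gt]'hlt) := by
            rw [sorted_getElem_lt_iff ho's v hlt]
            omega
          have hodd : (o'[gt]'hlt) % 2 = 1 := (mem_oddParts.mp (List.getElem_mem hlt)).2
          omega
        · -- v < o'[gt-1]
          rw [sorted_getElem_lt_iff ho's v h0]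
          omega
      · -- gt = |o'| : use condition (ii)
        have hlast : r'.length - 1 < r'.length := by omega
        have hlast_le : r'[r'.length - 1] ≤ v := by
          have := sorted_rel hr's (by omega : k ≤ r'.length - 1) hlast
          omega
        have hlast_even : r'[r'.length - 1] % 2 = 0 := by
          by_contra hlo
          have hlo' : r'[r'.length - 1] % 2 = 1 := by omega
          have hmem : r'[r'.length - 1] ∈ o' :=
            mem_oddParts.mpr ⟨List.getElem_mem hlast, hlo'⟩
          have := List.countP_eq_length.mp (hgt.symm.trans heq) _ hmem
          simp at this
          omega
        -- r' has even length
        have hsplit : r'.length = r'.countP (fun y => decide (y % 2 = 1)) +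
            r'.countP (fun y => decide (y % 2 = 0)) := by
          have h1 := countP_not_split r' (fun y => decide (y % 2 = 1))
          have h2 : r'.countP (fun a => !(decide (a % 2 = 1))) =
              r'.countP (fun y => decide (y % 2 = 0)) :=
            List.countP_congr (by intro x _; simp)
          omega
        have holen : o'.length = r'.countP (fun y => decide (y % 2 = 1)) := by
          rw [ho', oddParts, List.countP_eq_length_filter]
        have heven_e : Even (r'.countP (fun y => decide (y % 2 = 0))) := by
          rw [List.countP_eq_length_filter]
          refine (evl (hr's.filter _) ?_).1
          intro w
          rcases Nat.mod_two_eq_zero_or_one w with hw | hw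
          · rw [List.count_filter (by simpa using hw)]
            exact hr'q w hw
          · have : w ∉ r'.filter (fun y => decide (y % 2 = 0)) := by
              intro hmem
              have := (List.mem_filter.mp hmem).2
              simp at this
              omega
            rw [List.count_eq_zero.mpr this]
            exact Even.zero
        have hrlen_even : Even r'.length := by
          rw [Nat.even_iff] at heven_e ⊢
          omega
        have := hii hne hrlen_even
        rw [List.getD_eq_getElem _ _ hlast] at this
        omega
    -- conclusion for even v
    have hsc : scount c v % 2 = 1 := by
      have := hpar' v
      omega
    have hrc : rc c v = c.count v := by
      rw [rc, if_neg (by omega : ¬ v % 2 = 1), if_pos hsc]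
    rw [hrc]
    exact hle v
  · -- v odd
    set cnt := r'.count v with hcnt
    have hcnt_o : o'.count v = cnt := count_oddParts hv
    by_cases hc0 : cnt = 0
    · omega
    set gt := o'.countP (fun x => decide (v < x)) with hgt
    have hblock : gt + o'.count v ≤ o'.length := by
      rw [← countP_le_split]
      exact List.countP_le_length
    have hcnt2 : cnt ≤ 2 ∧ (cnt = 2 → gt % 2 = 1) := by
      by_cases h2 : 2 ≤ cnt
      · have hu1 : gt + 1 < o'.length := by omega
        have hu0 : gt < o'.length := by omega
        have he0 : o'[gt]'hu0 = v := by
          rw [sorted_getElem_eq_iff ho's v hu0]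
          omega
        have he1 : o'[gt+1]'hu1 = v := by
          rw [sorted_getElem_eq_iff ho's v hu1]
          omega
        have hgt_odd : gt % 2 = 1 := by
          by_contra hge
          have h3 : (gt + 1) % 2 = 1 := by omega
          have := hiii (gt+1) (by omega) (by omega) h3
          rw [List.getD_eq_getElem _ _ hu1]
          at this
          rw [show gt + 1 - 1 = gt by omega, List.getD_eq_getElem _ _ hu0] at this
          omega
        refine ⟨?_, fun _ => hgt_odd⟩
        by_contra h3
        have h3' : 3 ≤ cnt := by omega
        have hu2 : gt + 2 < o'.length := by omega
        have he2 : o'[gt+2]'hu2 = v := by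
          rw [sorted_getElem_eq_iff ho's v hu2]
          omega
        have h4 : (gt + 2) % 2 = 1 := by omega
        have := hiii (gt+2) (by omega) (by omega) h4
        rw [List.getD_eq_getElem _ _ hu2,
          show gt + 2 - 1 = gt + 1 by omega, List.getD_eq_getElem _ _ hu1] at this
        omega
      · exact ⟨by omega, by omega⟩
    have hpar_v : cnt % 2 = c.count v % 2 := hparity v hv
    rcases Nat.mod_two_eq_zero_or_one (c.count v) with hcv | hcv
    · -- c.count v even : cnt ∈ {0, 2}; cnt = 2 forces rc = 2
      have hcnt_eq2 : cnt = 2 := by omega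
      have hsc : scount c v % 2 = 1 := by
        have := hpar' v
        have := hcnt2.2 hcnt_eq2
        omega
      have h2c : 2 ≤ c.count v := le_trans (by omega) (hle v)
      rw [rc, if_pos hv, if_neg (by omega : ¬ c.count v % 2 = 1),
        if_pos ⟨hsc, h2c⟩]
      omega
    · -- c.count v odd : cnt odd ≤ 2 so cnt = 1
      rw [rc, if_pos hv, if_pos hcv]
      omega


lemma rl_Qset {c : List ℕ} (hs : c.Pairwise (· ≥ ·)) (hpos : ∀ x ∈ c, 0 < x)
    (hq : ∀ j, j % 2 = 0 → Even (c.count j)) : rl c ∈ Qset := by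
  refine ⟨⟨rl_sorted hs, fun x hx => hpos x (rl_mem_c hx)⟩, ?_⟩
  intro j hj
  rw [count_rl, rc, if_neg (by omega : ¬ j % 2 = 1)]
  split
  · exact hq j hj
  · exact Even.zero

lemma rl_Rset {c : List ℕ} (hs : c.Pairwise (· ≥ ·)) (hpos : ∀ x ∈ c, 0 < x)
    (hq : ∀ j, j % 2 = 0 → Even (c.count j)) : rl c ∈ Rset := by
  set R := rl c with hR
  set o := oddParts R with ho
  have hRs : R.Pairwise (· ≥ ·) := rl_sorted hs
  have hos : o.Pairwise (· ≥ ·) := oddParts_sorted hRs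
  have hpar : ∀ v, o.countP (fun x => decide (v < x)) % 2 = scount c v % 2 :=
    fun v => oddAbove_parity v (rl_count_parity c)
  refine ⟨rl_Qset hs hpos hq, ?_, ?_, ?_, ?_⟩
  · -- (i) head odd
    intro hne
    have hlen0 : 0 < R.length := List.length_pos_iff.mpr hne
    rw [List.getD_eq_getElem _ _ hlen0]
    by_contra hodd
    have hx_even : R[0] % 2 = 0 := by omega
    have hx_mem : R[0] ∈ R := List.getElem_mem hlen0
    have hx_cnt : 1 ≤ rc c R[0] := by
      rw [← count_rl, Nat.succ_le, List.count_pos_iff]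
      exact hx_mem
    have hsc := (rc_even_pos c hx_even (by omega)).1
    have hone : o.countP (fun x => decide (R[0] < x)) % 2 = 1 := by
      rw [hpar]; exact hsc
    have : 0 < o.countP (fun x => decide (R[0] < x)) := by omega
    rw [List.countP_pos_iff] at this
    obtain ⟨y, hy, hylt⟩ := this
    simp only [decide_eq_true_eq] at hylt
    obtain ⟨hyR, _⟩ := mem_oddParts.mp hy
    obtain ⟨j, hj, hjy⟩ := List.mem_iff_getElem.mp hyR
    have := sorted_rel hRs (Nat.zero_le j) hj
    omega
  · -- (ii) last odd if even length
    intro hne hevlen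
    have hlen0 : 0 < R.length := List.length_pos_iff.mpr hne
    have hlast : R.length - 1 < R.length := by omega
    rw [List.getD_eq_getElem _ _ hlast]
    by_contra hodd
    have hx_even : R[R.length - 1] % 2 = 0 := by omega
    have hx_mem : R[R.length - 1] ∈ R := List.getElem_mem hlast
    have hx_cnt : 1 ≤ rc c R[R.length - 1] := by
      rw [← count_rl, Nat.succ_le, List.count_pos_iff]; exact hx_mem
    have hsc := (rc_even_pos c hx_even (by omega)).1
    -- all odd parts are above the last element
    have hall : o.countP (fun x => decide (R[R.length - 1] < x)) = o.length := by
      rw [List.countP_eq_length]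
      intro y hy
      obtain ⟨hyR, hyo⟩ := mem_oddParts.mp hy
      obtain ⟨j, hj, hjy⟩ := List.mem_iff_getElem.mp hyR
      have := sorted_rel hRs (by omega : j ≤ R.length - 1) hlast
      simp only [decide_eq_true_eq]
      omega
    have holen_odd : o.length % 2 = 1 := by
      have := hpar R[R.length - 1]
      rw [hall] at this
      omega
    have hsplit : R.length = R.countP (fun y => decide (y % 2 = 1)) +
        R.countP (fun y => decide (y % 2 = 0)) := by
      have h1 := countP_not_split R (fun y => decide (y % 2 = 1))
      have h2 : R.countP (fun a => !(decide (a % 2 = 1))) =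
          R.countP (fun y => decide (y % 2 = 0)) :=
        List.countP_congr (by intro x _; simp)
      omega
    have holen : o.length = R.countP (fun y => decide (y % 2 = 1)) := by
      rw [ho, oddParts, List.countP_eq_length_filter]
    have heven_e : Even (R.countP (fun y => decide (y % 2 = 0))) := by
      rw [List.countP_eq_length_filter]
      refine (evl (hRs.filter _) ?_).1
      intro w
      rcases Nat.mod_two_eq_zero_or_one w with hw | hw
      · rw [List.count_filter (by simpa using hw), count_rl, rc,
          if_neg (by omega : ¬ w % 2 = 1)]
        split
        · exact hq w hw
        · exact Even.zero
      · have : w ∉ R.filter (fun y => decide (y % 2 = 0)) := by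
          intro hmem
          have := (List.mem_filter.mp hmem).2
          simp at this
          omega
        rw [List.count_eq_zero.mpr this]
        exact Even.zero
    rw [Nat.even_iff] at hevlen heven_e
    omega
  · -- (iii)
    intro u hu1 hu2 hu3
    rw [← ho] at hu2
    have h1 : u < o.length := by omega
    have h0 : u - 1 < o.length := by omega
    rw [List.getD_eq_getElem _ _ h1, List.getD_eq_getElem _ _ h0]
    by_contra hcon
    have hle : o[u] ≤ o[u-1] := sorted_rel hos (by omega) h1
    have heqv : o[u-1] = o[u] := by omega
    set w := o[u]'h1 with hw
    have hwmem : w ∈ o := List.getElem_mem h1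
    obtain ⟨hwR, hwodd⟩ := mem_oddParts.mp hwmem
    have hcount : o.count w = rc c w := by
      rw [ho, count_oddParts hwodd, count_rl]
    have hb1 := (sorted_getElem_eq_iff hos w h1).mp rfl
    have hb0 := (sorted_getElem_eq_iff hos w h0).mp heqv
    have hrc2 : rc c w = 2 := by
      have := rc_le_two c hwodd
      omega
    have hsc := (rc_eq_two c hwodd hrc2).1
    have hpw := hpar w
    omega
  · -- (iv)
    intro u hu1 hu2 hu4 k hk
    rw [← ho] at hu2
    rintro ⟨hlt1, hlt2⟩
    rw [← ho] at hlt1 hlt2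
    have h1 : u < o.length := by omega
    have h0 : u - 1 < o.length := by omega
    rw [List.getD_eq_getElem _ _ h1] at hlt1
    rw [List.getD_eq_getElem _ _ h0] at hlt2
    rw [List.getD_eq_getElem _ _ hk] at hlt1 hlt2
    set x := R[k]'hk with hx
    have hxR : x ∈ R := List.getElem_mem hk
    set gtx := o.countP (fun y => decide (x < y)) with hgtx
    have hgx1 : u - 1 < gtx := by
      rw [hgtx, ← sorted_getElem_lt_iff hos x h0]
      exact hlt2
    have hgx2 : ¬ (u < gtx) := by
      rw [hgtx, ← sorted_getElem_lt_iff hos x h1]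
      omega
    have hgxu : gtx = u := by omega
    rcases Nat.mod_two_eq_zero_or_one x with hxe | hxo
    · -- x even: contradiction with parity
      have hx_cnt : 1 ≤ rc c x := by
        rw [← count_rl, Nat.succ_le, List.count_pos_iff]; exact hxR
      have hsc := (rc_even_pos c hxe (by omega)).1
      have := hpar x
      omega
    · -- x odd: x would be o[u]
      have hxo' : x ∈ o := mem_oddParts.mpr ⟨hxR, hxo⟩
      have hcpos : 0 < o.count x := List.count_pos_iff.mpr hxo'
      have : o[u]'h1 = x := by
        rw [sorted_getElem_eq_iff hos x h1]
        omega
      omega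

lemma pl_count_even {c : List ℕ} (hq : ∀ j, j % 2 = 0 → Even (c.count j)) :
    ∀ v, Even ((pl c).count v) := by
  intro v
  rw [count_pl]
  rcases Nat.mod_two_eq_zero_or_one v with hv | hv
  · have h1 := hq v hv
    rw [rc, if_neg (by omega : ¬ v % 2 = 1)]
    split
    · simp
    · simpa using h1
  · have h1 := rc_parity c hv
    have h2 := rc_le_count c v
    rw [Nat.even_iff]
    omega

lemma pl_Ptilde {c : List ℕ} (hs : c.Pairwise (· ≥ ·)) (hpos : ∀ x ∈ c, 0 < x)
    (hq : ∀ j, j % 2 = 0 → Even (c.count j)) : pl c ∈ Ptilde := by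
  have hps : (pl c).Pairwise (· ≥ ·) := pl_sorted hs
  have := evl hps (pl_count_even hq)
  exact ⟨⟨hps, fun x hx => hpos x (pl_mem_c hx)⟩, this.1, this.2⟩

end Stmt7Aux



/-- for every `𝐧` and `c ∈ 𝒬_𝐧` there exists `(r,p) ∈ ι̃⁻¹(c) ⊆ A_𝐧` with
`μ_e(p') ≥ μ_e(p)` for every `(r',p')` in the fiber and every positive `e`; moreover any
element of the fiber with `μ_e(p') = μ_e(p)` for all positive `e` equals `(r,p)`. -/
theorem stmt7 (m : ℕ) (c : List ℕ) (hc : c ∈ QN m) :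
    ∃ rp : List ℕ × List ℕ,
      (rp ∈ An m ∧ pmerge rp.1 rp.2 = c) ∧
      (∀ rp' : List ℕ × List ℕ, (rp' ∈ An m ∧ pmerge rp'.1 rp'.2 = c) →
        ∀ e, 0 < e → rp.2.count e ≤ rp'.2.count e) ∧
      (∀ rp' : List ℕ × List ℕ, (rp' ∈ An m ∧ pmerge rp'.1 rp'.2 = c) →
        (∀ e, 0 < e → rp'.2.count e = rp.2.count e) → rp' = rp) := by
  classical
  obtain ⟨⟨⟨hs, hpos⟩, hq⟩, hsum⟩ := hc
  haveI : IsAntisymm ℕ (· ≥ ·) := ⟨fun a b h1 h2 => le_antisymm h2 h1⟩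
  -- facts about any fiber element
  have fiber_facts : ∀ rp' : List ℕ × List ℕ, (rp' ∈ An m ∧ pmerge rp'.1 rp'.2 = c) →
      (∀ v, rp'.1.count v + rp'.2.count v = c.count v) ∧
      (∀ v, rp'.1.count v ≤ Stmt7Aux.rc c v) ∧ (∀ v, Even (rp'.2.count v)) := by
    rintro ⟨r', p'⟩ ⟨⟨hr', hp', _⟩, hmerge⟩
    have hfiber : (r' ++ p').Perm c := by
      rw [pmerge] at hmerge
      exact hmerge ▸ (List.mergeSort_perm (r' ++ p') _).symm
    have hcount : ∀ v, r'.count v + p'.count v = c.count v := by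
      intro v
      rw [← List.count_append]
      exact hfiber.count_eq v
    obtain ⟨⟨hp's, hp'pos⟩, hp'len, hp'pair⟩ := hp'
    have hp'even : ∀ v, Even (p'.count v) := Stmt7Aux.evl' hp's hp'len hp'pair
    have hparity : ∀ w, w % 2 = 1 → r'.count w % 2 = c.count w % 2 := by
      intro w _
      have h1 := hp'even w
      have h2 := hcount w
      rw [Nat.even_iff] at h1
      omega
    have hle : ∀ w, r'.count w ≤ c.count w := fun w => by have := hcount w; omega
    exact ⟨hcount, Stmt7Aux.key_bound hle hparity hr', hp'even⟩
  refine ⟨(Stmt7Aux.rl c, Stmt7Aux.pl c), ⟨⟨Stmt7Aux.rl_Rset hs hpos hq,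
    Stmt7Aux.pl_Ptilde hs hpos hq, ?_⟩, ?_⟩, ?_, ?_⟩
  · -- sums
    rw [← List.sum_append]
    rw [(Stmt7Aux.rl_pl_perm c).sum_eq]
    exact hsum
  · -- pmerge
    rw [pmerge]
    have hperm : ((Stmt7Aux.rl c ++ Stmt7Aux.pl c).mergeSort
        (fun a b => decide (b ≤ a))).Perm c :=
      (List.mergeSort_perm _ _).trans (Stmt7Aux.rl_pl_perm c)
    have hsort : ((Stmt7Aux.rl c ++ Stmt7Aux.pl c).mergeSort
        (fun a b => decide (b ≤ a))).Pairwise (· ≥ ·) := by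
      have := List.pairwise_mergeSort (le := fun a b => decide (b ≤ a))
        (fun a b d hab hbd => by simp at *; omega)
        (fun a b => by simp; omega)
        (Stmt7Aux.rl c ++ Stmt7Aux.pl c)
      exact this.imp (fun h => by simpa using h)
    exact List.Perm.eq_of_pairwise (fun a b _ _ h1 h2 => le_antisymm h2 h1) hsort hs hperm
  · -- minimality
    rintro rp' hrp' e _
    obtain ⟨hcount, hkey, _⟩ := fiber_facts rp' hrp'
    have h1 := hcount e
    have h2 := hkey e
    have h3 := Stmt7Aux.rc_le_count c e
    rw [Stmt7Aux.count_pl]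
    omega
  · -- uniqueness
    rintro rp' hrp' heq
    obtain ⟨hcount, hkey, _⟩ := fiber_facts rp' hrp'
    obtain ⟨⟨hr', hp', _⟩, _⟩ := hrp'
    have hallp : ∀ e, rp'.2.count e = (Stmt7Aux.pl c).count e := by
      intro e
      cases e with
      | zero =>
        have h1 : (0:ℕ) ∉ rp'.2 := fun hmem => by
          have := hp'.1.2 0 hmem
          omega
        have h2 : (0:ℕ) ∉ Stmt7Aux.pl c := fun hmem => by
          have := hpos 0 (Stmt7Aux.pl_mem_c hmem)
          omega
        rw [List.count_eq_zero.mpr h1, List.count_eq_zero.mpr h2]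
      | succ n => exact heq (n+1) (Nat.succ_pos n)
    have hp'eq : rp'.2 = Stmt7Aux.pl c := by
      apply List.Perm.eq_of_pairwise (fun a b _ _ h1 h2 => le_antisymm h2 h1)
        hp'.1.1 (Stmt7Aux.pl_sorted hs) (List.perm_iff_count.mpr hallp)
    have hallr : ∀ e, rp'.1.count e = (Stmt7Aux.rl c).count e := by
      intro e
      have h1 := hcount e
      have h2 := hallp e
      have h3 := Stmt7Aux.count_pl c e
      have h4 := Stmt7Aux.count_rl c e
      have h5 := Stmt7Aux.rc_le_count c e
      omega
    have hr'eq : rp'.1 = Stmt7Aux.rl c := by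
      apply List.Perm.eq_of_pairwise (fun a b _ _ h1 h2 => le_antisymm h2 h1)
        hr'.1.1.1 (Stmt7Aux.rl_sorted hs) (List.perm_iff_count.mpr hallr)
    exact Prod.ext hr'eq hp'eq
end
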